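/- If M is a crystalline (φ_q, Γ_F)-module over R(Y) of rank d, then the natural map R(Y)[1/t] ⊗_F D_cris(M) → R(Y)[1/t] ⊗_{R(Y)} M is an isomorphism, where D_cris(M) = (R(Y)[1/t] ⊗_{R(Y)} M)^{Γ_F}. -/

import Mathlib

/-- Auxiliary lemma for `stmt19`: any `F`-linearly independent family in the
invariant subspace `Dcris` is `Rt`-linearly independent in `N`. -/
theorem stmt19_key (F : Type*) [Field F]
    (Rt : Type*) [CommRing Rt] [IsDomain Rt] [Algebra F Rt]
    (N : Type*) [AddCommGroup N] [Module Rt N] [Module F N] [IsScalarTower F Rt N]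
    (Γ : Type*) [Group Γ] [MulSemiringAction Γ Rt]
    (A : Γ → N ≃+ N)
    (hsemi : ∀ (g : Γ) (r : Rt) (x : N), A g (r • x) = (g • r) • A g x)
    (d : ℕ) (bN : Module.Basis (Fin d) Rt N)
    (Dcris : Submodule F N)
    (hDc : ∀ x : N, x ∈ Dcris ↔ ∀ g : Γ, A g x = x)
    (hfrac : ∀ a b : Rt, b ≠ 0 → (∀ g : Γ, (g • a) * b = a * (g • b)) →
      ∃ c : F, a = algebraMap F Rt c * b)
    (ι : Type*) (v : ι → Dcris) (hv : LinearIndependent F v) :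
    LinearIndependent Rt (fun i => (v i : N)) := by
  classical
  -- `N` is torsion-free over the domain `Rt`, being free.
  have htf : ∀ (r : Rt) (x : N), r ≠ 0 → r • x = 0 → x = 0 := by
    intro r x hr h
    have h1 : bN.repr (r • x) = 0 := by rw [h, map_zero]
    rw [map_smul] at h1
    have h2 : bN.repr x = 0 := by
      ext k
      have h3 := DFunLike.congr_fun h1 k
      simp only [Finsupp.smul_apply, Finsupp.coe_zero, Pi.zero_apply, smul_eq_mul] at h3
      rcases mul_eq_zero.mp h3 with h4 | h4
      · exact absurd h4 hr
      · simpa using h4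
    exact bN.repr.map_eq_zero_iff.mp h2
  have hvinv : ∀ (g : Γ) (i : ι), A g (v i : N) = (v i : N) :=
    fun g i => (hDc _).mp (v i).2 g
  rw [linearIndependent_iff'] at hv ⊢
  by_contra hni
  push_neg at hni
  obtain ⟨s₀, c₀, hsum₀, i₁, hi₁, hc₁⟩ := hni
  set P : ℕ → Prop := fun n => ∃ s : Finset ι, ∃ c : ι → Rt, s.card = n ∧
      (∀ i ∈ s, c i ≠ 0) ∧ (∃ i, i ∈ s) ∧ ∑ i ∈ s, c i • (v i : N) = 0 with hPdef
  have hex : ∃ n, P n := by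
    haveI : DecidablePred (fun i : ι => c₀ i ≠ 0) := Classical.decPred _
    set s' := s₀.filter (fun i => c₀ i ≠ 0) with hs'
    refine ⟨s'.card, s', c₀, rfl,
      fun i hi => (Finset.mem_filter.mp hi).2, ⟨i₁, Finset.mem_filter.mpr ⟨hi₁, hc₁⟩⟩, ?_⟩
    rw [hs', Finset.sum_filter_of_ne (fun i _ h0 => fun hc => h0 (by rw [hc, zero_smul]))]
    exact hsum₀
  obtain ⟨s, c, hcard, hcne, ⟨i0, hi0⟩, hsum⟩ := Nat.find_spec hex
  have hmin : ∀ m, m < Nat.find hex → ¬ P m := fun m hm => Nat.find_min hex hm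
  have hci0 : c i0 ≠ 0 := hcne i0 hi0
  -- the `g`-twisted relation
  have hgsum : ∀ g : Γ, ∑ i ∈ s, (g • c i) • (v i : N) = 0 := by
    intro g
    have h0 : A g (∑ i ∈ s, c i • (v i : N)) = 0 := by rw [hsum, map_zero]
    rw [map_sum] at h0
    have heq : ∑ i ∈ s, A g (c i • (v i : N)) = ∑ i ∈ s, (g • c i) • (v i : N) :=
      Finset.sum_congr rfl fun i _ => by rw [hsemi, hvinv]
    rw [heq] at h0
    exact h0
  -- minimality forces proportionality of the relation and its twists
  have hrel : ∀ (g : Γ), ∀ i ∈ s, c i0 * (g • c i) = (g • c i0) * c i := by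
    intro g
    set c' : ι → Rt := fun i => c i0 * (g • c i) - (g • c i0) * c i with hc'
    have hsum' : ∑ i ∈ s, c' i • (v i : N) = 0 := by
      have h5 : ∑ i ∈ s, c' i • (v i : N)
          = c i0 • (∑ i ∈ s, (g • c i) • (v i : N))
            - (g • c i0) • (∑ i ∈ s, c i • (v i : N)) := by
        rw [Finset.smul_sum, Finset.smul_sum, ← Finset.sum_sub_distrib]
        exact Finset.sum_congr rfl fun i _ => by rw [smul_smul, smul_smul, sub_smul]
      rw [h5, hgsum, hsum, smul_zero, smul_zero, sub_zero]
    have hc'i0 : c' i0 = 0 := by simp [hc', mul_comm]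
    intro i hi
    by_contra hne
    have hc'ine : c' i ≠ 0 := sub_ne_zero.mpr hne
    haveI : DecidablePred (fun j : ι => c' j ≠ 0) := Classical.decPred _
    set s2 := (s.erase i0).filter (fun j => c' j ≠ 0) with hs2
    have hii0 : i ≠ i0 := by
      intro h
      rw [h] at hc'ine
      exact hc'ine hc'i0
    have hi_mem : i ∈ s2 := by
      rw [hs2, Finset.mem_filter, Finset.mem_erase]
      exact ⟨⟨hii0, hi⟩, hc'ine⟩
    have hsum2 : ∑ j ∈ s2, c' j • (v j : N) = 0 := by
      have h1 : ∑ j ∈ s.erase i0, c' j • (v j : N) = ∑ j ∈ s, c' j • (v j : N) :=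
        Finset.sum_erase _ (by rw [hc'i0, zero_smul])
      have h2 : ∑ j ∈ s2, c' j • (v j : N) = ∑ j ∈ s.erase i0, c' j • (v j : N) :=
        Finset.sum_filter_of_ne (fun j _ hj => fun h0 => hj (by rw [h0, zero_smul]))
      rw [h2, h1, hsum']
    have hcard2 : s2.card < Nat.find hex := by
      calc s2.card ≤ (s.erase i0).card := Finset.card_filter_le _ _
        _ < s.card := Finset.card_erase_lt_of_mem hi0
        _ = Nat.find hex := hcard
    exact hmin _ hcard2 ⟨s2, c', rfl, fun j hj => (Finset.mem_filter.mp hj).2, ⟨i, hi_mem⟩, hsum2⟩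
  -- apply `hfrac` to each coefficient
  have hcoef : ∀ i ∈ s, ∃ e : F, c i = algebraMap F Rt e * c i0 := by
    intro i hi
    refine hfrac (c i) (c i0) hci0 (fun g => ?_)
    calc (g • c i) * c i0 = c i0 * (g • c i) := mul_comm _ _
      _ = (g • c i0) * c i := hrel g i hi
      _ = c i * (g • c i0) := mul_comm _ _
  set E : ι → F := fun i => if h : i ∈ s then (hcoef i h).choose else 0 with hEdef
  have hE : ∀ i ∈ s, c i = algebraMap F Rt (E i) * c i0 := by
    intro i hi
    simp only [hEdef, dif_pos hi]
    exact (hcoef i hi).choose_spec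
  -- derive an `F`-relation among the `v i`
  have hN : (c i0) • (∑ i ∈ s, E i • (v i : N)) = 0 := by
    rw [Finset.smul_sum, ← hsum]
    refine Finset.sum_congr rfl fun i hi => ?_
    rw [← algebraMap_smul Rt (E i) (v i : N), smul_smul, mul_comm, ← hE i hi]
  have hN2 : ∑ i ∈ s, E i • (v i : N) = 0 := htf _ _ hci0 hN
  have hsumE : ∑ i ∈ s, E i • v i = (0 : Dcris) := by
    have hco : ((∑ i ∈ s, E i • v i : Dcris) : N) = 0 := by
      rw [Submodule.coe_sum]
      simpa using hN2
    exact Subtype.ext hco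
  have hE0 := hv s E hsumE i0 hi0
  apply hci0
  rw [hE i0 hi0, hE0, map_zero, zero_mul]


/-- If `M` is a crystalline `(φ_q, Γ_F)`-module over `R(Y)` of rank `d`,
then the natural map `R(Y)[1/t] ⊗_F D_cris(M) → R(Y)[1/t] ⊗_{R(Y)} M` is an isomorphism,
where `D_cris(M) = (R(Y)[1/t] ⊗_{R(Y)} M)^{Γ_F}`.

Here `Rt` models the domain `R(Y)[1/t]` with its `Γ_F`-action, `N` models
`R(Y)[1/t] ⊗_{R(Y)} M` — free of rank `d` over `Rt` (a consequence of the crystallinity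
conditions (1),(2), since each `f_j` divides a power of `t`) with a semilinear
`Γ`-action `A` — and `Dcris` is the `F`-subspace of `Γ`-invariants, of dimension `d`
(crystallinity condition (3)).  The hypotheses `hfrac` and `hstabunit` record
`Frac(R(Y))^{Γ_F} = F` (lemma `invfro`) and the classification of `Γ`-stable principal
ideals (proposition `idealgam`: such an ideal of `R(Y)[1/t]` is the unit ideal).  The
conclusion — bijectivity of the natural map `Rt ⊗_F Dcris → N`, `r ⊗ x ↦ r • x` — is
expressed equivalently: every `F`-linearly independent family in `Dcris` is
`Rt`-linearly independent in `N` (injectivity), and `Dcris` spans `N` over `Rt`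
(surjectivity). -/
theorem stmt19 (F : Type*) [Field F]
    (Rt : Type*) [CommRing Rt] [IsDomain Rt] [Algebra F Rt]
    (N : Type*) [AddCommGroup N] [Module Rt N] [Module F N] [IsScalarTower F Rt N]
    (Γ : Type*) [Group Γ] [MulSemiringAction Γ Rt]
    (hFfix : ∀ (g : Γ) (c : F), g • algebraMap F Rt c = algebraMap F Rt c)
    (A : Γ → N ≃+ N)
    (hA1 : ∀ (g₁ g₂ : Γ) (x : N), A (g₁ * g₂) x = A g₁ (A g₂ x))
    (hsemi : ∀ (g : Γ) (r : Rt) (x : N), A g (r • x) = (g • r) • A g x)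
    (d : ℕ) (bN : Module.Basis (Fin d) Rt N)
    (Dcris : Submodule F N)
    (hDc : ∀ x : N, x ∈ Dcris ↔ ∀ g : Γ, A g x = x)
    (hdim : Module.finrank F Dcris = d)
    (hfrac : ∀ a b : Rt, b ≠ 0 → (∀ g : Γ, (g • a) * b = a * (g • b)) →
      ∃ c : F, a = algebraMap F Rt c * b)
    (hstabunit : ∀ x : Rt, x ≠ 0 →
      (∀ g : Γ, Ideal.span {g • x} = Ideal.span {x}) → IsUnit x) :
    (∀ (ι : Type) (v : ι → Dcris), LinearIndependent F v →
      LinearIndependent Rt (fun i => (v i : N))) ∧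
    Submodule.span Rt (Dcris : Set N) = ⊤ := by
  classical
  have key : ∀ (ι : Type _) (v : ι → Dcris), LinearIndependent F v →
      LinearIndependent Rt (fun i => (v i : N)) :=
    fun ι v hv => stmt19_key F Rt N Γ A hsemi d bN Dcris hDc hfrac ι v hv
  refine ⟨fun ι v hv => stmt19_key F Rt N Γ A hsemi d bN Dcris hDc hfrac ι v hv, ?_⟩
  -- `Dcris` is finite dimensional over `F`
  haveI hfinN : Module.Finite Rt N := Module.Finite.of_basis bN
  have hrankD : Module.rank F Dcris ≤ (d : Cardinal) := by
    refine rank_le fun t ht => ?_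
    have h1 := (key ↥t (fun i : t => (i : Dcris)) ht).fintype_card_le_finrank
    rw [Module.finrank_eq_card_basis bN, Fintype.card_fin, Fintype.card_coe] at h1
    exact h1
  haveI hnoeth : IsNoetherian F Dcris :=
    IsNoetherian.iff_rank_lt_aleph0.mpr (hrankD.trans_lt (Cardinal.nat_lt_aleph0 d))
  haveI hfd : FiniteDimensional F Dcris := ⟨IsNoetherian.noetherian (⊤ : Submodule F Dcris)⟩
  -- a basis of `Dcris`, viewed inside `N`
  let bD : Module.Basis (Fin d) F Dcris := Module.finBasisOfFinrankEq F Dcris hdim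
  set e : Fin d → N := fun i => (bD i : N) with hedef
  have he : LinearIndependent Rt e :=
    stmt19_key F Rt N Γ A hsemi d bN Dcris hDc hfrac (Fin d) bD bD.linearIndependent
  have hemem : ∀ i, e i ∈ Dcris := fun i => (bD i).2
  set P : Matrix (Fin d) (Fin d) Rt := bN.toMatrix e with hPdef
  have hPapp : ∀ k j, P k j = bN.repr (e j) k := fun k j => Module.Basis.toMatrix_apply bN e k j
  have hPe : ∀ j, ∑ i, P i j • bN i = e j := by
    intro j
    have := bN.sum_repr (e j)
    simpa only [hPapp] using this
  -- the determinant is nonzero since `e` is `Rt`-linearly independent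
  have hdet : P.det ≠ 0 := by
    intro h0
    obtain ⟨w, hw, hmv⟩ := Matrix.exists_mulVec_eq_zero_iff.mpr h0
    have hz : ∑ j, w j • e j = 0 := by
      have h1 : bN.repr (∑ j, w j • e j) = 0 := by
        ext k
        have h2 : (bN.repr (∑ j, w j • e j)) k = ∑ j, w j * P k j := by
          rw [map_sum, Finsupp.finset_sum_apply]
          exact Finset.sum_congr rfl fun j _ => by
            rw [map_smul, Finsupp.smul_apply, smul_eq_mul, hPapp]
        have h3 : ∑ j, w j * P k j = P.mulVec w k := by
          rw [Matrix.mulVec, dotProduct]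
          exact Finset.sum_congr rfl fun j _ => mul_comm _ _
        rw [Finsupp.coe_zero, Pi.zero_apply, h2, h3, hmv, Pi.zero_apply]
      exact bN.repr.map_eq_zero_iff.mp h1
    have := Fintype.linearIndependent_iff.mp he w hz
    exact hw (funext fun i => this i)
  -- the matrix of the semilinear action
  set Bm : Γ → Matrix (Fin d) (Fin d) Rt := fun g k i => bN.repr (A g (bN i)) k with hBmdef
  have hmat : ∀ (g : Γ) k j, P k j = ∑ i, Bm g k i * (g • P i j) := by
    intro g k j
    have h1 : e j = ∑ i, (g • P i j) • A g (bN i) := by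
      calc e j = A g (e j) := ((hDc _).mp (hemem j) g).symm
        _ = A g (∑ i, P i j • bN i) := by rw [hPe j]
        _ = ∑ i, A g (P i j • bN i) := map_sum _ _ _
        _ = ∑ i, (g • P i j) • A g (bN i) :=
            Finset.sum_congr rfl fun i _ => hsemi g _ _
    have h2 : bN.repr (e j) k = ∑ i, (g • P i j) * Bm g k i := by
      rw [h1, map_sum, Finsupp.finset_sum_apply]
      exact Finset.sum_congr rfl fun i _ => by
        rw [map_smul, Finsupp.smul_apply, smul_eq_mul, hBmdef]
    rw [hPapp, h2]
    exact Finset.sum_congr rfl fun i _ => mul_comm _ _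
  -- determinant relation
  have hdetrel : ∀ g : Γ, P.det = (Bm g).det * (g • P.det) := by
    intro g
    have hPm : P = Bm g * (MulSemiringAction.toRingHom Γ Rt g).mapMatrix P := by
      ext k j
      rw [Matrix.mul_apply, hmat g k j]
      exact Finset.sum_congr rfl fun i _ => by
        rw [RingHom.mapMatrix_apply, Matrix.map_apply]
        rfl
    calc P.det = (Bm g * (MulSemiringAction.toRingHom Γ Rt g).mapMatrix P).det := by
          rw [← hPm]
      _ = (Bm g).det * ((MulSemiringAction.toRingHom Γ Rt g).mapMatrix P).det :=
          Matrix.det_mul _ _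
      _ = (Bm g).det * (g • P.det) := by
          rw [← RingHom.map_det]
          rfl
  -- the principal ideal generated by the determinant is `Γ`-stable
  have hstab : ∀ g : Γ, Ideal.span {g • P.det} = Ideal.span {P.det} := by
    intro g
    apply le_antisymm
    · rw [Ideal.span_singleton_le_span_singleton]
      have h1 := hdetrel g⁻¹
      have h2 := congrArg (fun r : Rt => g • r) h1
      simp only [smul_mul'] at h2
      rw [smul_inv_smul] at h2
      exact ⟨g • (Bm g⁻¹).det, by rw [h2]; ring⟩
    · rw [Ideal.span_singleton_le_span_singleton]
      exact ⟨(Bm g).det, by conv_lhs => rw [hdetrel g]; rw [mul_comm]⟩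
  have hunit : IsUnit P.det := hstabunit _ hdet hstab
  have hbasis : LinearIndependent Rt e ∧ Submodule.span Rt (Set.range e) = ⊤ :=
    (Module.Basis.is_basis_iff_det bN).mpr (by rwa [Module.Basis.det_apply])
  rw [eq_top_iff, ← hbasis.2]
  exact Submodule.span_mono (fun x hx => by obtain ⟨i, rfl⟩ := hx; exact hemem i)
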